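/- Let p be an odd prime and λ = (λ_1, λ_2, …, λ_r) a BG-partition. Let k = max{i : λ_i ≥ i}. Then the partition μ = (λ_1, λ_2, …, λ_k) is p-regular. -/
import Mathlib


namespace Mull

/-- A partition of a natural number, encoded as the (0-indexed) weakly decreasing,
eventually-zero sequence of its row lengths.  The Young diagram of `f` is the set
of (0-indexed) nodes `(i, j)` with `j < f i`. -/
def IsPartition (f : ℕ → ℕ) : Prop :=
  Antitone f ∧ ∃ N, f N = 0

/-- The number of nonzero rows of `f`. -/
noncomputable def len (f : ℕ → ℕ) : ℕ :=
  sInf {N | f N = 0}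

/-- The size (number of nodes) of `f`. -/
noncomputable def size (f : ℕ → ℕ) : ℕ :=
  ∑ i ∈ Finset.range (len f), f i

/-- The conjugate (transpose) partition: `conj f j` is the number of rows `i`
with `f i > j`, i.e. the length of the `j`-th column. -/
noncomputable def conj (f : ℕ → ℕ) : ℕ → ℕ :=
  fun j => Nat.card {i | j < f i}

/-- A partition is self-conjugate if it equals its conjugate. -/
def SelfConj (f : ℕ → ℕ) : Prop :=
  conj f = f

/-- The hook length of `f` at the (0-indexed) node `(i, j)`:
in 1-indexed terms this is `λ_i + λ'_j - i - j + 1`. -/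
noncomputable def hook (f : ℕ → ℕ) (i j : ℕ) : ℕ :=
  f i + conj f j - i - j - 1

/-- A BG-partition: a self-conjugate partition none of whose diagonal hook lengths
is divisible by `p`. -/
def IsBG (p : ℕ) (f : ℕ → ℕ) : Prop :=
  IsPartition f ∧ SelfConj f ∧ ∀ i, i < f i → ¬ p ∣ hook f i i

/-- A partition is `p`-regular if it does not have `p` equal nonzero parts. -/
def IsRegular (p : ℕ) (f : ℕ → ℕ) : Prop :=
  ∀ i, f (i + (p - 1)) ≠ 0 → f i ≠ f (i + (p - 1))

/-- The list of nodes of the rim of `f` (nodes `(i, j)` of the diagram such that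
`(i+1, j+1)` is not in the diagram), listed from the top right to the bottom left. -/
noncomputable def rimList (f : ℕ → ℕ) : List (ℕ × ℕ) :=
  (List.range (len f)).flatMap fun i =>
    (List.range (f i - (f (i + 1) - 1))).map fun k => (i, f i - 1 - k)

/-- Auxiliary selection of the `p`-rim from the ordered list of rim nodes (with fuel):
take the next `p`-segment (the next `p` rim nodes), then, if the last selected node is
not in the bottom row, skip the remaining rim nodes lying in the row of the last
selected node and continue from the next row. -/
def pRimAux (p : ℕ) : ℕ → List (ℕ × ℕ) → List (ℕ × ℕ)
  | 0, _ => []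
  | _ + 1, [] => []
  | fuel + 1, c :: L =>
    (c :: L).take p ++
      pRimAux p fuel (((c :: L).drop p).filter
        fun d => (((c :: L).take p).getLastD c).1 < d.1)

/-- The list of nodes of the `p`-rim of `f`, from the top right to the bottom left. -/
noncomputable def pRimList (p : ℕ) (f : ℕ → ℕ) : List (ℕ × ℕ) :=
  pRimAux p (rimList f).length (rimList f)

/-- `f` minus its `p`-rim. -/
noncomputable def removeRim (p : ℕ) (f : ℕ → ℕ) : ℕ → ℕ :=
  fun i => f i - ((pRimList p f).filter fun c => c.1 = i).length

/-- The number of columns of the Mullineux symbol of `f` (i.e. `l + 1`), namely the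
number of times the `p`-rim must be removed to reach the empty partition. -/
noncomputable def steps (p : ℕ) (f : ℕ → ℕ) : ℕ :=
  sInf {k | len ((removeRim p)^[k] f) = 0}

/-- `a_i`: the number of nodes of the `p`-rim of `λ^(i)`. -/
noncomputable def aSeq (p : ℕ) (f : ℕ → ℕ) (i : ℕ) : ℕ :=
  (pRimList p ((removeRim p)^[i] f)).length

/-- `r_i`: the number of nonzero rows of `λ^(i)`. -/
noncomputable def rSeq (p : ℕ) (f : ℕ → ℕ) (i : ℕ) : ℕ :=
  len ((removeRim p)^[i] f)

/-- `ε_i`: `0` if `p ∣ a_i` and `1` otherwise. -/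
noncomputable def epsSeq (p : ℕ) (f : ℕ → ℕ) (i : ℕ) : ℕ :=
  if p ∣ aSeq p f i then 0 else 1

/-- The Mullineux symbol of `f`, recorded as the list of its columns
`(a_i, r_i)` for `0 ≤ i ≤ l`. -/
noncomputable def GSymb (p : ℕ) (f : ℕ → ℕ) : List (ℕ × ℕ) :=
  (List.range (steps p f)).map fun i => (aSeq p f i, rSeq p f i)

/-- The effect of the Mullineux map on one column of the Mullineux symbol:
`(a_i, r_i) ↦ (a_i, s_i)` where `s_i = a_i + ε_i - r_i`. -/
def mullCol (p : ℕ) (c : ℕ × ℕ) : ℕ × ℕ :=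
  (c.1, c.1 + (if p ∣ c.1 then 0 else 1) - c.2)

/-- `f` is a self-Mullineux partition: a `p`-regular partition fixed by the Mullineux
map, i.e. every column of its Mullineux symbol is fixed by `mullCol`. -/
def SelfMull (p : ℕ) (f : ℕ → ℕ) : Prop :=
  IsPartition f ∧ IsRegular p f ∧ (GSymb p f).map (mullCol p) = GSymb p f

/-- `U_λ`: the nodes of the `p`-rim lying on or above the diagonal. -/
noncomputable def UList (p : ℕ) (f : ℕ → ℕ) : List (ℕ × ℕ) :=
  (pRimList p f).filter fun c => c.1 ≤ c.2

/-- The `p`-rim* of a self-conjugate partition: `U_λ ∪ L_λ`, where `L_λ` is the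
reflection of `U_λ` across the diagonal. -/
noncomputable def rimStar (p : ℕ) (f : ℕ → ℕ) : Finset (ℕ × ℕ) :=
  (UList p f).toFinset ∪ (UList p f).toFinset.image fun c => (c.2, c.1)

/-- `a*`: the number of nodes of the `p`-rim*. -/
noncomputable def aStar (p : ℕ) (f : ℕ → ℕ) : ℕ :=
  (rimStar p f).card

/-- `r*`: the number of nodes of `U_λ`. -/
noncomputable def rStar (p : ℕ) (f : ℕ → ℕ) : ℕ :=
  (UList p f).toFinset.card

/-- `ε* = a* mod 2`. -/
noncomputable def epsStar (p : ℕ) (f : ℕ → ℕ) : ℕ :=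
  aStar p f % 2

/-- `λ^(1)*`: `f` minus its `p`-rim*. -/
noncomputable def removeRimStar (p : ℕ) (f : ℕ → ℕ) : ℕ → ℕ :=
  fun i => f i - ((rimStar p f).filter fun c => c.1 = i).card

/-- The number of columns of the BG-symbol of `f`. -/
noncomputable def stepsStar (p : ℕ) (f : ℕ → ℕ) : ℕ :=
  sInf {k | len ((removeRimStar p)^[k] f) = 0}

/-- The BG-symbol of a self-conjugate partition, recorded as the list of its columns
`(a*_i, r*_i)` for `0 ≤ i ≤ l`. -/
noncomputable def BGSymb (p : ℕ) (f : ℕ → ℕ) : List (ℕ × ℕ) :=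
  (List.range (stepsStar p f)).map fun i =>
    (aStar p ((removeRimStar p)^[i] f), rStar p ((removeRimStar p)^[i] f))

/-- The number of diagonal nodes of `f`, i.e. `max {i : λ_i ≥ i}` in 1-indexed terms. -/
noncomputable def kDiag (f : ℕ → ℕ) : ℕ :=
  Nat.card {i | i < f i}

/-- The sequence of diagonal hook lengths of `f` (padded with zeros). -/
noncomputable def diagHooks (f : ℕ → ℕ) : ℕ → ℕ :=
  fun i => if i < f i then hook f i i else 0

/-- Lemma: truncating a BG-partition `λ` to its first `k` rows, where
`k = max {i : λ_i ≥ i}` is the number of diagonal nodes, yields a `p`-regular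
partition. -/
lemma lt_of_lt_kDiag (f : ℕ → ℕ) (hanti : Antitone f) {j : ℕ} (h : j < kDiag f) :
    j < f j := by
  by_contra hle
  push_neg at hle
  have hsub : {i | i < f i} ⊆ Set.Iio j := by
    intro i hi
    rw [Set.mem_Iio]
    by_contra hji
    push_neg at hji
    have h1 : f i ≤ j := (hanti hji).trans hle
    have h2 : i < f i := hi
    omega
  have hcard : kDiag f ≤ j := by
    have := Nat.card_mono (Set.finite_Iio j) hsub
    simpa [kDiag] using this
  omega

theorem truncated_bg_is_regular (p : ℕ) (hp : p.Prime) (hodd : Odd p)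
    (f : ℕ → ℕ) (hf : IsBG p f) :
    IsRegular p (fun i => if i < kDiag f then f i else 0) := by
  obtain ⟨⟨hanti, N, hN⟩, hsc, hdiag⟩ := hf
  intro i hne heq
  haveI : Fact p.Prime := ⟨hp⟩
  by_cases hk : i + (p - 1) < kDiag f
  swap
  · simp only [hk, if_neg, if_false] at hne; exact hne rfl
  have hik : i < kDiag f := lt_of_le_of_lt (Nat.le_add_right _ _) hk
  simp only [if_pos hk, if_pos hik] at hne heq
  -- `heq : f i = f (i + (p-1))`
  set m := f i with hm
  have hp2 : (2 : ZMod p) ≠ 0 := by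
    have : ((2 : ℕ) : ZMod p) ≠ 0 := by
      rw [Ne, ZMod.natCast_eq_zero_iff]
      intro hd
      have := (Nat.prime_dvd_prime_iff_eq hp Nat.prime_two).mp hd
      exact (Nat.not_even_iff_odd.mpr hodd) (by rw [this]; exact even_two)
    simpa using this
  set c : ZMod p := (2 * (m : ZMod p) - 1 - 2 * (i : ZMod p)) / 2 with hc
  have h2c : (2 : ZMod p) * c = 2 * (m : ZMod p) - 1 - 2 * (i : ZMod p) := by
    rw [hc, mul_div_cancel₀ _ hp2]
  set r : ℕ := c.val with hr
  have hrp : r < p := ZMod.val_lt c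
  set j : ℕ := i + r with hj
  have hjle : j ≤ i + (p - 1) := by omega
  have hjk : j < kDiag f := lt_of_le_of_lt hjle hk
  have hjf : j < f j := lt_of_lt_kDiag f hanti hjk
  have hfj : f j = m := le_antisymm (hanti (by omega))
    (heq ▸ hanti hjle)
  have hhook : hook f j j + 2 * j + 1 = 2 * m := by
    unfold hook
    rw [hsc, hfj]
    omega
  have hcast : ((j : ZMod p)) = (i : ZMod p) + c := by
    rw [hj]
    push_cast
    rw [hr, ZMod.natCast_val, ZMod.cast_id]
  have h2j : (2 : ZMod p) * (j : ZMod p) = 2 * (m : ZMod p) - 1 := by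
    rw [hcast, mul_add, h2c]; ring
  have hzero : ((hook f j j : ℕ) : ZMod p) = 0 := by
    have h1 : ((hook f j j : ℕ) : ZMod p) + 2 * j + 1 = 2 * m := by
      exact_mod_cast congrArg (Nat.cast : ℕ → ZMod p) hhook
    linear_combination h1 - h2j
  have hdvd : p ∣ hook f j j := (ZMod.natCast_eq_zero_iff _ _).mp hzero
  exact hdiag j hjf hdvd

end Mull
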